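/- There exist a strictly positive real constant α (namely α = lim_{n→∞} c_n/2^n) and a constant K > 0 such that for all sufficiently large n: if n is even then |c_n − α·2^n| ≤ K·2^{n/4}, and if n is odd then |c_n − α·(2^n + 2^{⌊n/2⌋+1})| ≤ K·2^{n/4}. In particular, c_n/2^n → α as n → ∞, so asymptotically a fixed proportion α of all 2^n head/tail strings of length n are optimal strategies for Player I. -/

import Mathlib

/-- The Conway number (correlation) `C(A,B)` of two head/tail strings of length `n`,
encoded as functions `Fin n → Bool` (with `H = true`, `T = false`, and 0-indexed
positions): `C(A,B) = ∑_{i=1}^n δ_i 2^{n-i}` where `δ_i = 1` iff `a_{i+j} = b_{1+j}`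
for all `j = 0,…,n-i`. -/
def conway {n : ℕ} (A B : Fin n → Bool) : ℕ :=
  ∑ i : Fin n,
    if (∀ j : Fin n, (i : ℕ) + (j : ℕ) < n → A (i + j) = B j) then 2 ^ (n - 1 - (i : ℕ)) else 0

/-- `cstar m` is the number of head/tail strings of length `m` beginning with `HT`,
ending with `TH`, whose autocorrelation is `2^{m-1} + 1`. -/
def cstar (m : ℕ) : ℕ :=
  Fintype.card {A : Fin m → Bool //
    (∀ i : Fin m, (i : ℕ) = 0 → A i = true) ∧
    (∀ i : Fin m, (i : ℕ) = 1 → A i = false) ∧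
    (∀ i : Fin m, (i : ℕ) = m - 2 → A i = false) ∧
    (∀ i : Fin m, (i : ℕ) = m - 1 → A i = true) ∧
    conway A A = 2 ^ (m - 1) + 1}

/-- `c n = 2 * cstar (n-1)`: by Csirik's characterization, the number of optimal
strategies for Player I in the Penney-Ante game with strings of length `n`. -/
def c (n : ℕ) : ℕ := 2 * cstar (n - 1)


/-- Border predicate: `B` (viewed as a word of length `m`) has a border of length `ℓ`. -/
def Brd (m ℓ : ℕ) (B : ℕ → Bool) : Prop := ∀ i < ℓ, B i = B (m - ℓ + i)

/-- The "good" words: start `HT`, end `TH`, no border of length in `[2, m-1]`. -/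
def GoodF (m : ℕ) (B : ℕ → Bool) : Prop :=
  B 0 = true ∧ B 1 = false ∧ B (m-2) = false ∧ B (m-1) = true ∧
    ∀ ℓ < m, 2 ≤ ℓ → ¬ Brd m ℓ B

instance (m ℓ : ℕ) (B : ℕ → Bool) : Decidable (Brd m ℓ B) := by
  unfold Brd; infer_instance

instance (m : ℕ) (B : ℕ → Bool) : Decidable (GoodF m B) := by
  unfold GoodF; infer_instance

lemma Brd_congr {m ℓ : ℕ} {B B' : ℕ → Bool} (h : ∀ i < m, B i = B' i) (hℓ : ℓ < m) :
    Brd m ℓ B ↔ Brd m ℓ B' := by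
  constructor <;> intro hb i hi
  · rw [← h i (by omega), ← h (m - ℓ + i) (by omega)]; exact hb i hi
  · rw [h i (by omega), h (m - ℓ + i) (by omega)]; exact hb i hi

lemma GoodF_congr {m : ℕ} {B B' : ℕ → Bool} (hm : 2 ≤ m) (h : ∀ i < m, B i = B' i) :
    GoodF m B ↔ GoodF m B' := by
  unfold GoodF
  rw [h 0 (by omega), h 1 (by omega), h (m-2) (by omega), h (m-1) (by omega)]
  have : ∀ ℓ < m, 2 ≤ ℓ → (Brd m ℓ B ↔ Brd m ℓ B') := fun ℓ hℓ _ => Brd_congr h hℓ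
  constructor <;> rintro ⟨a, b, c, d, e⟩ <;> refine ⟨a, b, c, d, fun ℓ hℓ h2 => ?_⟩
  · rw [← this ℓ hℓ h2]; exact e ℓ hℓ h2
  · rw [this ℓ hℓ h2]; exact e ℓ hℓ h2

/-- Border reduction: a long border yields a shorter one. -/
lemma Brd_reduce {m ℓ : ℕ} {B : ℕ → Bool} (h1 : m < 2*ℓ) (h2 : ℓ < m) (hb : Brd m ℓ B) :
    Brd m (2*ℓ - m) B := by
  intro i hi
  have e1 : B i = B (m - ℓ + i) := hb i (by omega)
  have e2 : B (m - ℓ + i) = B (m - ℓ + (m - ℓ + i)) := hb (m - ℓ + i) (by omega)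
  have : m - (2*ℓ - m) + i = m - ℓ + (m - ℓ + i) := by omega
  rw [this]; rw [← e2]; exact e1

/-- If there is a border of length in `[2, m)`, there is one with `2ℓ ≤ m+1`. -/
lemma Brd_min {m : ℕ} {B : ℕ → Bool} :
    ∀ ℓ, 2 ≤ ℓ → ℓ < m → Brd m ℓ B → ∃ ℓ', 2 ≤ ℓ' ∧ 2*ℓ' ≤ m + 1 ∧ ℓ' < m ∧ Brd m ℓ' B := by
  intro ℓ
  induction ℓ using Nat.strong_induction_on with
  | _ ℓ ih =>
    intro h2 hm hb
    by_cases hc : 2*ℓ ≤ m + 1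
    · exact ⟨ℓ, h2, hc, hm, hb⟩
    · exact ih (2*ℓ - m) (by omega) (by omega) (by omega) (Brd_reduce (by omega) hm hb)

/-- Insert value `x` at position `k`. -/
def insF (k : ℕ) (x : Bool) (B : ℕ → Bool) : ℕ → Bool :=
  fun i => if i < k then B i else if i = k then x else B (i - 1)

/-- Delete position `k`. -/
def delF (k : ℕ) (B : ℕ → Bool) : ℕ → Bool := fun i => if i < k then B i else B (i + 1)

/-- `u ↦ u ++ u[1:]` for `u` of length `k+1` (result length `2k+1`). -/
def dblF (k : ℕ) (B : ℕ → Bool) : ℕ → Bool := fun i => if i ≤ k then B i else B (i - k)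

/-- `u ↦ u ++ [F] ++ u[1:]` for `u` of length `k` (result length `2k`). -/
def dbl0F (k : ℕ) (B : ℕ → Bool) : ℕ → Bool :=
  fun i => if i < k then B i else if i = k then false else B (i - k)

lemma delF_insF (k : ℕ) (x : Bool) (B : ℕ → Bool) : delF k (insF k x B) = B := by
  funext i; simp only [delF, insF]
  by_cases h : i < k
  · simp [h]
  · have h1 : ¬ (i + 1 < k) := by omega
    have h2 : ¬ (i + 1 = k) := by omega
    simp [h, h1, h2]

lemma insF_delF (k : ℕ) (B : ℕ → Bool) : insF k (B k) (delF k B) = B := by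
  funext i; simp only [delF, insF]
  by_cases h : i < k
  · simp [h]
  · by_cases h2 : i = k
    · simp [h, h2]
    · have h3 : ¬ (i - 1 < k) := by omega
      have h4 : i - 1 + 1 = i := by omega
      simp [h, h2, h3, h4]

/-- A1: inserting any letter in the middle of a good word of odd length `2k-1`. -/
lemma ins_good_even {k : ℕ} (hk : 3 ≤ k) {B : ℕ → Bool} (hB : GoodF (2*k-1) B) (x : Bool) :
    GoodF (2*k) (insF k x B) := by
  obtain ⟨b0, b1, b2, b3, nb⟩ := hB
  set W := insF k x B with hW
  have w_lt : ∀ i, i < k → W i = B i := fun i hi => by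
    simp only [hW, insF]; rw [if_pos hi]
  have w_gt : ∀ i, k < i → W i = B (i - 1) := fun i hi => by
    simp only [hW, insF]; rw [if_neg (by omega : ¬ i < k), if_neg (by omega : ¬ i = k)]
  refine ⟨by rw [w_lt 0 (by omega)]; exact b0,
          by rw [w_lt 1 (by omega)]; exact b1,
          ?_, ?_, ?_⟩
  · rw [(by omega : 2*k - 2 = 2*k-2), w_gt (2*k-2) (by omega), (by omega : 2*k-2-1 = 2*k-1-2)]
    exact b2
  · rw [w_gt (2*k-1) (by omega), (by omega : 2*k-1-1 = 2*k-1-1)]; exact b3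
  · -- no borders
    intro ℓ hℓm h2 hb
    obtain ⟨ℓ', h2', hle', hlt', hb'⟩ := Brd_min ℓ h2 hℓm hb
    -- ℓ' ≤ k
    rcases Nat.lt_or_ge ℓ' k with hlk | hlk
    · -- ℓ' ≤ k - 1 : gives border of B
      refine nb ℓ' (by omega) h2' ?_
      intro i hi
      have e := hb' i hi
      rw [w_lt i (by omega), w_gt (2*k - ℓ' + i) (by omega)] at e
      rw [(by omega : 2*k - 1 - ℓ' + i = 2*k - ℓ' + i - 1)]
      exact e
    · have hk' : ℓ' = k := by omega
      subst hk'
      -- gives border of B of length k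
      refine nb ℓ' (by omega) h2' ?_
      intro i hi
      rcases Nat.eq_zero_or_pos i with rfl | hip
      · -- B 0 = B (k-1): use relation at i = ℓ'-1
        have e := hb' (ℓ'-1) (by omega)
        rw [w_lt (ℓ'-1) (by omega), w_gt (2*ℓ' - ℓ' + (ℓ'-1)) (by omega)] at e
        rw [(by omega : 2*ℓ' - ℓ' + (ℓ' - 1) - 1 = 2*ℓ'-1-1)] at e
        rw [b0, (by omega : 2*ℓ' - 1 - ℓ' + 0 = ℓ' - 1)]
        rw [e, b3]
      · have e := hb' i hi
        rw [w_lt i (by omega), w_gt (2*ℓ' - ℓ' + i) (by omega)] at e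
        rw [(by omega : 2*ℓ' - 1 - ℓ' + i = 2*ℓ' - ℓ' + i - 1)]
        exact e

/-- A2: if deleting the middle letter of a good word of length `2k` is not good,
the word has the special doubled form. -/
lemma del_not_good_even {k : ℕ} (hk : 3 ≤ k) {B : ℕ → Bool} (hB : GoodF (2*k) B)
    (hnd : ¬ GoodF (2*k-1) (delF k B)) :
    GoodF k B ∧ ∀ i < 2*k, B i = dbl0F k B i := by
  obtain ⟨b0, b1, b2, b3, nb⟩ := hB
  set W := delF k B with hW
  have w_lt : ∀ i, i < k → W i = B i := fun i hi => by
    simp only [hW, delF]; rw [if_pos hi]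
  have w_ge : ∀ i, k ≤ i → W i = B (i + 1) := fun i hi => by
    simp only [hW, delF]; rw [if_neg (by omega : ¬ i < k)]
  -- W satisfies boundary conditions, so failure is a border
  have hbord : ∃ ℓ, 2 ≤ ℓ ∧ ℓ < 2*k-1 ∧ Brd (2*k-1) ℓ W := by
    by_contra hno
    push_neg at hno
    exact hnd ⟨by rw [w_lt 0 (by omega)]; exact b0,
      by rw [w_lt 1 (by omega)]; exact b1,
      by rw [(by omega : 2*k-1-2 = 2*k-3), w_ge (2*k-3) (by omega),
             (by omega : 2*k-3+1 = 2*k-2)]; exact b2,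
      by rw [(by omega : 2*k-1-1 = 2*k-2), w_ge (2*k-2) (by omega),
             (by omega : 2*k-2+1 = 2*k-1)]; exact b3,
      fun ℓ hℓ h2 hb => hno ℓ h2 hℓ hb⟩
  obtain ⟨ℓ, h2, hℓ, hb⟩ := hbord
  obtain ⟨ℓ', h2', hle', hlt', hb'⟩ := Brd_min ℓ h2 hℓ hb
  rcases Nat.lt_or_ge ℓ' k with hlk | hlk
  · -- ℓ' ≤ k-1: border of B, contradiction
    exfalso
    refine nb ℓ' (by omega) h2' ?_
    intro i hi
    have e := hb' i hi
    rw [w_lt i (by omega), w_ge (2*k-1 - ℓ' + i) (by omega)] at e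
    rw [(by omega : 2*k - ℓ' + i = 2*k-1-ℓ'+i+1)]
    exact e
  · have hk' : ℓ' = k := by omega
    subst hk'
    -- relation: B i = B (k + i) for 1 ≤ i < k, and B 0 = B (k-1)
    have rel : ∀ i, 1 ≤ i → i < ℓ' → B i = B (ℓ' + i) := by
      intro i h1 hi
      have e := hb' i hi
      rw [w_lt i hi, w_ge (2*ℓ'-1-ℓ'+i) (by omega),
          (by omega : 2*ℓ'-1-ℓ'+i+1 = ℓ' + i)] at e
      exact e
    have rel0 : B (ℓ'-1) = true := by
      have e := hb' 0 (by omega)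
      rw [w_lt 0 (by omega), (by omega : 2*ℓ'-1-ℓ'+0 = ℓ'-1), w_lt (ℓ'-1) (by omega)] at e
      rw [← e]; exact b0
    have nk : B ℓ' = false := by
      by_contra hcon
      have hbk : B ℓ' = true := by
        cases hx : B ℓ' with
        | false => exact absurd hx hcon
        | true => rfl
      refine nb ℓ' (by omega) (by omega) ?_
      intro i hi
      rcases Nat.eq_zero_or_pos i with rfl | hip
      · rw [b0, (by omega : 2*ℓ' - ℓ' + 0 = ℓ'), hbk]
      · rw [(by omega : 2*ℓ' - ℓ' + i = ℓ' + i)]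
        exact rel i hip hi
    constructor
    · refine ⟨b0, by rwa [(by omega : (1:ℕ) = 1)], ?_, ?_, ?_⟩
      · rw [rel (ℓ'-2) (by omega) (by omega), (by omega : ℓ' + (ℓ'-2) = 2*ℓ'-2)]
        exact b2
      · exact rel0
      · intro ℓ hℓ h2u hbu
        refine nb ℓ (by omega) h2u ?_
        intro i hi
        have step : B (ℓ' - ℓ + i) = B (ℓ' + (ℓ' - ℓ + i)) :=
          rel (ℓ' - ℓ + i) (by omega) (by omega)
        rw [(by omega : 2*ℓ' - ℓ + i = ℓ' + (ℓ' - ℓ + i)), ← step]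
        exact hbu i hi
    · intro i hi
      simp only [dbl0F]
      rcases Nat.lt_trichotomy i ℓ' with h | h | h
      · rw [if_pos h]
      · subst h; rw [if_neg (by omega), if_pos rfl]; exact nk
      · rw [if_neg (by omega), if_neg (by omega)]
        have h5 := (rel (i - ℓ') (by omega) (by omega)).symm
        rw [(by omega : ℓ' + (i - ℓ') = i)] at h5
        exact h5

/-- A3: the doubled form of a good word of length `k` is good of length `2k`,
and deleting its middle is not good. -/
lemma dbl0_good {k : ℕ} (hk : 3 ≤ k) {B : ℕ → Bool} (hB : GoodF k B) :
    GoodF (2*k) (dbl0F k B) ∧ ¬ GoodF (2*k-1) (delF k (dbl0F k B)) := by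
  obtain ⟨b0, b1, b2, b3, nb⟩ := hB
  set W := dbl0F k B with hW
  have w_lt : ∀ i, i < k → W i = B i := fun i hi => by
    simp only [hW, dbl0F]; rw [if_pos hi]
  have w_k : W k = false := by simp [hW, dbl0F]
  have w_gt : ∀ i, k < i → W i = B (i - k) := fun i hi => by
    simp only [hW, dbl0F]; rw [if_neg (by omega : ¬ i < k), if_neg (by omega : ¬ i = k)]
  constructor
  · refine ⟨by rw [w_lt 0 (by omega)]; exact b0,
            by rw [w_lt 1 (by omega)]; exact b1,
            by rw [w_gt (2*k-2) (by omega), (by omega : 2*k-2-k = k-2)]; exact b2,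
            by rw [w_gt (2*k-1) (by omega), (by omega : 2*k-1-k = k-1)]; exact b3, ?_⟩
    intro ℓ hℓm h2 hb
    obtain ⟨ℓ', h2', hle', hlt', hb'⟩ := Brd_min ℓ h2 hℓm hb
    rcases Nat.lt_or_ge ℓ' k with hlk | hlk
    · refine nb ℓ' (by omega) h2' ?_
      intro i hi
      have e := hb' i hi
      rw [w_lt i (by omega), w_gt (2*k - ℓ' + i) (by omega),
          (by omega : 2*k - ℓ' + i - k = k - ℓ' + i)] at e
      exact e
    · have hk' : ℓ' = k := by omega
      subst hk'
      have e := hb' 0 (by omega)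
      rw [w_lt 0 (by omega), (by omega : 2*ℓ' - ℓ' + 0 = ℓ'), w_k, b0] at e
      exact Bool.noConfusion e   -- e : true = false
  · intro hgood
    set V := delF k W with hV
    have v_lt : ∀ i, i < k → V i = B i := fun i hi => by
      simp only [hV, delF]; rw [if_pos hi]; exact w_lt i hi
    have v_ge : ∀ i, k ≤ i → V i = B (i + 1 - k) := fun i hi => by
      simp only [hV, delF]; rw [if_neg (by omega : ¬ i < k), w_gt (i+1) (by omega)]
    obtain ⟨_, _, _, _, nbv⟩ := hgood
    refine nbv k (by omega) (by omega) ?_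
    intro i hi
    rcases Nat.eq_zero_or_pos i with rfl | hip
    · rw [v_lt 0 (by omega), (by omega : 2*k-1-k+0 = k-1), v_lt (k-1) (by omega)]
      rw [b0, b3]
    · rw [v_lt i (by omega), (by omega : 2*k-1-k+i = k-1+i), v_ge (k-1+i) (by omega),
          (by omega : k-1+i+1-k = i)]

/-- B1: deleting the middle letter of a good word of length `2k+1` is good. -/
lemma del_good_odd {k : ℕ} (hk : 3 ≤ k) {B : ℕ → Bool} (hB : GoodF (2*k+1) B) :
    GoodF (2*k) (delF k B) := by
  obtain ⟨b0, b1, b2, b3, nb⟩ := hB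
  set W := delF k B with hW
  have w_lt : ∀ i, i < k → W i = B i := fun i hi => by
    simp only [hW, delF]; rw [if_pos hi]
  have w_ge : ∀ i, k ≤ i → W i = B (i + 1) := fun i hi => by
    simp only [hW, delF]; rw [if_neg (by omega : ¬ i < k)]
  refine ⟨by rw [w_lt 0 (by omega)]; exact b0,
          by rw [w_lt 1 (by omega)]; exact b1,
          by rw [w_ge (2*k-2) (by omega), (by omega : 2*k-2+1 = 2*k+1-2)]; exact b2,
          by rw [w_ge (2*k-1) (by omega), (by omega : 2*k-1+1 = 2*k+1-1)]; exact b3, ?_⟩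
  intro ℓ hℓm h2 hb
  obtain ⟨ℓ', h2', hle', hlt', hb'⟩ := Brd_min ℓ h2 hℓm hb
  rcases Nat.lt_or_ge ℓ' k with hlk | hlk
  · refine nb ℓ' (by omega) h2' ?_
    intro i hi
    have e := hb' i hi
    rw [w_lt i (by omega), w_ge (2*k - ℓ' + i) (by omega)] at e
    rw [(by omega : 2*k+1-ℓ'+i = 2*k-ℓ'+i+1)]
    exact e
  · have hk' : ℓ' = k := by omega
    subst hk'
    refine nb ℓ' (by omega) (by omega) ?_
    intro i hi
    have e := hb' i hi
    rw [w_lt i (by omega), w_ge (2*ℓ' - ℓ' + i) (by omega)] at e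
    rw [(by omega : 2*ℓ'+1-ℓ'+i = 2*ℓ' - ℓ' + i + 1)]
    exact e

/-- helper for B2: a good word of length `2k` has no `insF`-border of length `≤ k`. -/
lemma ins_no_short_border {k : ℕ} (hk : 3 ≤ k) {B : ℕ → Bool} (hB : GoodF (2*k) B) (x : Bool)
    {ℓ : ℕ} (h2 : 2 ≤ ℓ) (hlk : ℓ ≤ k) : ¬ Brd (2*k+1) ℓ (insF k x B) := by
  obtain ⟨b0, b1, b2, b3, nb⟩ := hB
  set W := insF k x B with hW
  have w_lt : ∀ i, i < k → W i = B i := fun i hi => by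
    simp only [hW, insF]; rw [if_pos hi]
  have w_gt : ∀ i, k < i → W i = B (i - 1) := fun i hi => by
    simp only [hW, insF]; rw [if_neg (by omega : ¬ i < k), if_neg (by omega : ¬ i = k)]
  intro hb
  rcases Nat.lt_or_ge ℓ k with hlt | hge
  · refine nb ℓ (by omega) h2 ?_
    intro i hi
    have e := hb i hi
    rw [w_lt i (by omega), w_gt (2*k+1-ℓ+i) (by omega)] at e
    rw [(by omega : 2*k - ℓ + i = 2*k+1-ℓ+i-1)]
    exact e
  · have hk' : ℓ = k := by omega
    refine nb ℓ (by omega) h2 ?_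
    intro i hi
    have e := hb i hi
    rw [w_lt i (by omega), w_gt (2*k+1-ℓ+i) (by omega),
        (by omega : 2*k+1-ℓ+i-1 = 2*k-ℓ+i)] at e
    exact e

/-- B2: if inserting a letter in the middle of a good word of length `2k` is not good,
the result has the doubled form with a good half of length `k+1`. -/
lemma ins_not_good_odd {k : ℕ} (hk : 3 ≤ k) {B : ℕ → Bool} (hB : GoodF (2*k) B) (x : Bool)
    (hng : ¬ GoodF (2*k+1) (insF k x B)) :
    GoodF (k+1) (insF k x B) ∧
      ∀ i < 2*k+1, insF k x B i = dblF k (insF k x B) i := by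
  obtain ⟨b0, b1, b2, b3, nb⟩ := hB
  set W := insF k x B with hW
  have w_lt : ∀ i, i < k → W i = B i := fun i hi => by
    simp only [hW, insF]; rw [if_pos hi]
  have w_gt : ∀ i, k < i → W i = B (i - 1) := fun i hi => by
    simp only [hW, insF]; rw [if_neg (by omega : ¬ i < k), if_neg (by omega : ¬ i = k)]
  have hbord : ∃ ℓ, 2 ≤ ℓ ∧ ℓ < 2*k+1 ∧ Brd (2*k+1) ℓ W := by
    by_contra hno
    push_neg at hno
    exact hng ⟨by rw [w_lt 0 (by omega)]; exact b0,
      by rw [w_lt 1 (by omega)]; exact b1,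
      by rw [(by omega : 2*k+1-2 = 2*k-1), w_gt (2*k-1) (by omega),
             (by omega : 2*k-1-1 = 2*k-2)]; exact b2,
      by rw [(by omega : 2*k+1-1 = 2*k), w_gt (2*k) (by omega)]; exact b3,
      fun ℓ hℓ h2 hb => hno ℓ h2 hℓ hb⟩
  obtain ⟨ℓ, h2, hℓ, hb⟩ := hbord
  obtain ⟨ℓ', h2', hle', hlt', hb'⟩ := Brd_min ℓ h2 hℓ hb
  have hkk : ℓ' = k + 1 := by
    rcases Nat.lt_or_ge ℓ' (k+1) with h | h
    · exact absurd hb' (ins_no_short_border hk ⟨b0,b1,b2,b3,nb⟩ x h2' (by omega))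
    · omega
  subst hkk
  -- border relation: ∀ i < k+1, W i = W (k + i)
  have rel : ∀ i, i < k + 1 → W i = W (k + i) := by
    intro i hi
    have e := hb' i hi
    rw [(by omega : 2*k+1-(k+1)+i = k+i)] at e
    exact e
  have main : ∀ i < 2*k+1, W i = dblF k W i := by
    intro i hi
    simp only [dblF]
    rcases le_or_gt i k with h | h
    · rw [if_pos h]
    · rw [if_neg (by omega)]
      have h5 := rel (i - k) (by omega : i - k < k + 1)
      rw [(by omega : k + (i - k) = i)] at h5
      exact h5.symm
  refine ⟨⟨by rw [w_lt 0 (by omega)]; exact b0,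
          by rw [w_lt 1 (by omega)]; exact b1, ?_, ?_, ?_⟩, main⟩
  · -- W (k+1-2) = W (k-1) = false
    rw [(by omega : k+1-2 = k-1), rel (k-1) (by omega), (by omega : k + (k-1) = 2*k-1),
        w_gt (2*k-1) (by omega), (by omega : 2*k-1-1 = 2*k-2)]
    exact b2
  · rw [(by omega : k+1-1 = k), rel k (by omega), (by omega : k + k = 2*k),
        w_gt (2*k) (by omega)]
    exact b3
  · -- no borders of W as a (k+1)-word
    intro ℓu hℓu h2u hbu
    refine ins_no_short_border hk ⟨b0,b1,b2,b3,nb⟩ x h2u (by omega) ?_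
    intro i hi
    show W i = W (2*k+1-ℓu+i)
    have e1 : W (k+1-ℓu+i) = W (k + (k+1-ℓu+i)) := rel (k+1-ℓu+i) (by omega)
    rw [(by omega : 2*k+1-ℓu+i = k + (k+1-ℓu+i)), ← e1]
    exact hbu i hi

/-- B3: the doubled word of a good word of length `k+1` is not good, but its
middle-deletion is good of length `2k`. -/
lemma dbl_good {k : ℕ} (hk : 3 ≤ k) {B : ℕ → Bool} (hB : GoodF (k+1) B) :
    ¬ GoodF (2*k+1) (dblF k B) ∧ GoodF (2*k) (delF k (dblF k B)) := by
  obtain ⟨b0, b1, b2, b3, nb⟩ := hB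
  have bk : B k = true := by rw [(by omega : k = k+1-1)]; exact b3
  have bk1 : B (k-1) = false := by rw [(by omega : k-1 = k+1-2)]; exact b2
  set W := dblF k B with hW
  have w_le : ∀ i, i ≤ k → W i = B i := fun i hi => by
    simp only [hW, dblF]; rw [if_pos hi]
  have w_gt : ∀ i, k < i → W i = B (i - k) := fun i hi => by
    simp only [hW, dblF]; rw [if_neg (by omega : ¬ i ≤ k)]
  constructor
  · intro hgood
    obtain ⟨_, _, _, _, nbw⟩ := hgood
    refine nbw (k+1) (by omega) (by omega) ?_
    intro i hi
    rw [(by omega : 2*k+1-(k+1)+i = k+i)]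
    rcases Nat.eq_zero_or_pos i with rfl | hip
    · rw [w_le 0 (by omega), (by omega : k + 0 = k), w_le k (by omega), b0, bk]
    · rw [w_le i (by omega), w_gt (k+i) (by omega), (by omega : k+i-k = i)]
  · set V := delF k W with hV
    have v_lt : ∀ i, i < k → V i = B i := fun i hi => by
      simp only [hV, delF]; rw [if_pos hi]; exact w_le i (by omega)
    have v_ge : ∀ i, k ≤ i → V i = B (i + 1 - k) := fun i hi => by
      simp only [hV, delF]; rw [if_neg (by omega : ¬ i < k), w_gt (i+1) (by omega)]
    refine ⟨by rw [v_lt 0 (by omega)]; exact b0,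
            by rw [v_lt 1 (by omega)]; exact b1,
            by rw [v_ge (2*k-2) (by omega), (by omega : 2*k-2+1-k = k-1)]; exact bk1,
            by rw [v_ge (2*k-1) (by omega), (by omega : 2*k-1+1-k = k)]; exact bk, ?_⟩
    intro ℓ hℓm h2 hb
    obtain ⟨ℓ', h2', hle', hlt', hb'⟩ := Brd_min ℓ h2 hℓm hb
    rcases Nat.lt_or_ge ℓ' k with hlk | hlk
    · refine nb ℓ' (by omega) h2' ?_
      intro i hi
      have e := hb' i hi
      rw [v_lt i (by omega), v_ge (2*k-ℓ'+i) (by omega),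
          (by omega : 2*k-ℓ'+i+1-k = k+1-ℓ'+i)] at e
      exact e
    · have hk' : ℓ' = k := by omega
      subst hk'
      have e := hb' 0 (by omega)
      rw [v_lt 0 (by omega), (by omega : 2*ℓ'-ℓ'+0 = ℓ'), v_ge ℓ' (by omega),
          (by omega : ℓ'+1-ℓ' = 1), b0, b1] at e
      exact Bool.noConfusion e

/-! ### Transfer between `Fin m → Bool` and `ℕ → Bool` -/

def extF {m : ℕ} (A : Fin m → Bool) : ℕ → Bool := fun i => if h : i < m then A ⟨i, h⟩ else false

def ofF (m : ℕ) (B : ℕ → Bool) : Fin m → Bool := fun i => B i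

lemma extF_lt {m : ℕ} (A : Fin m → Bool) {i : ℕ} (h : i < m) : extF A i = A ⟨i, h⟩ :=
  dif_pos h

lemma extF_val {m : ℕ} (A : Fin m → Bool) (i : Fin m) : extF A i = A i := by
  rw [extF_lt A i.isLt]

lemma extF_ofF {m : ℕ} (B : ℕ → Bool) : ∀ i < m, extF (ofF m B) i = B i := by
  intro i h; rw [extF_lt _ h]; rfl

lemma insF_congr {k n : ℕ} (x : Bool) {C C' : ℕ → Bool} (hk : k ≤ n)
    (h : ∀ j < n, C j = C' j) : ∀ i < n + 1, insF k x C i = insF k x C' i := by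
  intro i hi
  simp only [insF]
  by_cases h1 : i < k
  · rw [if_pos h1, if_pos h1, h i (by omega)]
  · by_cases h2 : i = k
    · rw [if_neg h1, if_neg h1, if_pos h2, if_pos h2]
    · rw [if_neg h1, if_neg h1, if_neg h2, if_neg h2, h (i-1) (by omega)]

lemma delF_congr {k n : ℕ} {C C' : ℕ → Bool}
    (h : ∀ j < n + 1, C j = C' j) : ∀ i < n, delF k C i = delF k C' i := by
  intro i hi
  simp only [delF]
  by_cases h1 : i < k
  · rw [if_pos h1, if_pos h1, h i (by omega)]
  · rw [if_neg h1, if_neg h1, h (i+1) (by omega)]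

lemma dbl0F_congr {k : ℕ} {C C' : ℕ → Bool}
    (h : ∀ j < k, C j = C' j) : ∀ i < 2*k, dbl0F k C i = dbl0F k C' i := by
  intro i hi
  simp only [dbl0F]
  by_cases h1 : i < k
  · rw [if_pos h1, if_pos h1, h i (by omega)]
  · by_cases h2 : i = k
    · rw [if_neg h1, if_neg h1, if_pos h2, if_pos h2]
    · rw [if_neg h1, if_neg h1, if_neg h2, if_neg h2, h (i-k) (by omega)]

lemma dblF_congr {k : ℕ} {C C' : ℕ → Bool}
    (h : ∀ j < k + 1, C j = C' j) : ∀ i < 2*k + 1, dblF k C i = dblF k C' i := by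
  intro i hi
  simp only [dblF]
  by_cases h1 : i ≤ k
  · rw [if_pos h1, if_pos h1, h i (by omega)]
  · rw [if_neg h1, if_neg h1, h (i-k) (by omega)]

/-! ### `cstar` counts good words -/

lemma fix_iff {m : ℕ} (A : Fin m → Bool) (v : ℕ) (hv : v < m) (b : Bool) :
    (∀ i : Fin m, (i : ℕ) = v → A i = b) ↔ extF A v = b := by
  constructor
  · intro h; rw [extF_lt A hv]; exact h ⟨v, hv⟩ rfl
  · intro h i hi
    rw [← extF_val A i, hi]; exact h

lemma conway_term {m : ℕ} (A : Fin m → Bool) (i : Fin m) :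
    (∀ j : Fin m, (i : ℕ) + (j : ℕ) < m → A (i + j) = A j) ↔
      (∀ j < m - (i : ℕ), extF A ((i : ℕ) + j) = extF A j) := by
  constructor
  · intro h j hj
    have hjm : j < m := by omega
    have e := h ⟨j, hjm⟩ (by simpa using (by omega : (i:ℕ) + j < m))
    have : (i + ⟨j, hjm⟩ : Fin m) = ⟨(i:ℕ) + j, by omega⟩ := by
      apply Fin.ext
      simp [Fin.add_def, Nat.mod_eq_of_lt (by omega : (i:ℕ) + j < m)]
    rw [this] at e
    rw [extF_lt A (by omega : (i:ℕ) + j < m), extF_lt A hjm]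
    exact e
  · intro h j hj
    have e := h (j : ℕ) (by omega)
    rw [extF_lt A (by omega : (i:ℕ) + (j:ℕ) < m), extF_lt A j.isLt] at e
    have : (i + j : Fin m) = ⟨(i:ℕ) + (j:ℕ), by omega⟩ := by
      apply Fin.ext
      simp [Fin.add_def, Nat.mod_eq_of_lt (by omega : (i:ℕ) + (j:ℕ) < m)]
    rw [this]
    simpa using e

lemma conway_eq_sum {m : ℕ} (A : Fin m → Bool) :
    conway A A = ∑ i ∈ Finset.range m,
      (if (∀ j < m - i, extF A (i + j) = extF A j) then 2 ^ (m - 1 - i) else 0) := by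
  unfold conway
  rw [Finset.sum_range fun i => _]
  apply Finset.sum_congr rfl
  intro i _
  by_cases h : (∀ j : Fin m, (i : ℕ) + (j : ℕ) < m → A (i + j) = A j)
  · rw [if_pos h, if_pos ((conway_term A i).mp h)]
  · rw [if_neg h, if_neg (fun hc => h ((conway_term A i).mpr hc))]

lemma conway_char {m : ℕ} (hm : 3 ≤ m) (A : Fin m → Bool)
    (h0 : extF A 0 = true) (h3 : extF A (m-1) = true) :
    conway A A = 2 ^ (m - 1) + 1 ↔ ∀ ℓ < m, 2 ≤ ℓ → ¬ Brd m ℓ (extF A) := by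
  rw [conway_eq_sum A]
  have hsplit : Finset.range m = insert 0 (insert (m-1) (Finset.Ioo 0 (m-1))) := by
    ext x
    simp only [Finset.mem_range, Finset.mem_insert, Finset.mem_Ioo]
    omega
  rw [hsplit, Finset.sum_insert (by simp; omega), Finset.sum_insert (by simp)]
  have e0 : (if (∀ j < m - 0, extF A (0 + j) = extF A j) then 2 ^ (m - 1 - 0) else 0)
      = 2 ^ (m-1) := by
    rw [if_pos]; · simp
    · intro j _; rw [Nat.zero_add]
  have e1 : (if (∀ j < m - (m-1), extF A ((m-1) + j) = extF A j) then 2 ^ (m - 1 - (m-1)) else 0)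
      = 1 := by
    rw [if_pos]
    · simp
    · intro j hj
      have : j = 0 := by omega
      subst this
      rw [Nat.add_zero, h0, h3]
  rw [e0, e1]
  constructor
  · intro h ℓ hℓ h2 hb
    have hz : ∑ i ∈ Finset.Ioo 0 (m-1),
        (if (∀ j < m - i, extF A (i + j) = extF A j) then 2 ^ (m - 1 - i) else 0) = 0 := by
      omega
    rw [Finset.sum_eq_zero_iff] at hz
    have hi := hz (m - ℓ) (by simp only [Finset.mem_Ioo]; omega)
    rw [if_pos] at hi
    · exact absurd hi (by positivity)
    · intro j hj
      have := hb j (by omega)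
      rw [(by omega : m - (m - ℓ)  = ℓ)] at hj
      rw [(by omega : m - ℓ + j = m - ℓ + j)]
      exact (hb j hj).symm
  · intro h
    have hz : ∑ i ∈ Finset.Ioo 0 (m-1),
        (if (∀ j < m - i, extF A (i + j) = extF A j) then 2 ^ (m - 1 - i) else 0) = 0 := by
      apply Finset.sum_eq_zero
      intro i hi
      simp only [Finset.mem_Ioo] at hi
      rw [if_neg]
      intro hq
      refine h (m - i) (by omega) (by omega) ?_
      intro t ht
      rw [(by omega : m - (m - i) = i)]
      exact (hq t (by omega : t < m - i)).symm
    omega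

lemma cstar_eq {m : ℕ} (hm : 3 ≤ m) :
    cstar m = Fintype.card {A : Fin m → Bool // GoodF m (extF A)} := by
  unfold cstar
  apply Fintype.card_congr
  apply Equiv.subtypeEquivRight
  intro A
  rw [fix_iff A 0 (by omega), fix_iff A 1 (by omega), fix_iff A (m-2) (by omega),
      fix_iff A (m-1) (by omega)]
  unfold GoodF
  constructor
  · rintro ⟨a, b, c, d, e⟩
    exact ⟨a, b, c, d, (conway_char hm A a d).mp e⟩
  · rintro ⟨a, b, c, d, e⟩
    exact ⟨a, b, c, d, (conway_char hm A a d).mpr e⟩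

/-! ### The recurrences -/

lemma insF_at_k (k : ℕ) (x : Bool) (B : ℕ → Bool) : insF k x B k = x := by
  simp [insF]

lemma rec_even {k : ℕ} (hk : 3 ≤ k) : cstar (2*k) = 2 * cstar (2*k-1) + cstar k := by
  rw [cstar_eq (by omega : 3 ≤ 2*k), cstar_eq (by omega : 3 ≤ 2*k-1), cstar_eq hk]
  have e : {A : Fin (2*k) → Bool // GoodF (2*k) (extF A)} ≃
      ({A : Fin (2*k-1) → Bool // GoodF (2*k-1) (extF A)} × Bool) ⊕
        {A : Fin k → Bool // GoodF k (extF A)} := by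
    refine ⟨fun A => if h : GoodF (2*k-1) (delF k (extF A.1)) then
        Sum.inl (⟨ofF (2*k-1) (delF k (extF A.1)),
          (GoodF_congr (by omega) (extF_ofF _)).mpr h⟩, extF A.1 k)
      else
        Sum.inr ⟨ofF k (extF A.1),
          (GoodF_congr (by omega) (extF_ofF _)).mpr (del_not_good_even hk A.2 h).1⟩,
      Sum.elim
        (fun p => ⟨ofF (2*k) (insF k p.2 (extF p.1.1)),
          (GoodF_congr (by omega) (extF_ofF _)).mpr
            (ins_good_even hk ((GoodF_congr (by omega) (fun i hi => rfl)).mp p.1.2) p.2)⟩)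
        (fun u => ⟨ofF (2*k) (dbl0F k (extF u.1)),
          (GoodF_congr (by omega) (extF_ofF _)).mpr (dbl0_good hk u.2).1⟩),
      ?_, ?_⟩
    · -- left inverse
      intro A
      dsimp only
      by_cases h : GoodF (2*k-1) (delF k (extF A.1))
      · rw [dif_pos h]
        apply Subtype.ext
        funext i
        show insF k (extF A.1 k) (extF (ofF (2*k-1) (delF k (extF A.1)))) ↑i = A.1 i
        have s1 := insF_congr (extF A.1 k) (by omega : k ≤ 2*k-1)
          (extF_ofF (m := 2*k-1) (delF k (extF A.1))) ↑i (by omega)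
        rw [s1, insF_delF k (extF A.1), extF_val]
      · rw [dif_neg h]
        apply Subtype.ext
        funext i
        show dbl0F k (extF (ofF k (extF A.1))) ↑i = A.1 i
        have s1 := dbl0F_congr (extF_ofF (m := k) (extF A.1)) ↑i i.isLt
        rw [s1, ← (del_not_good_even hk A.2 h).2 ↑i i.isLt, extF_val]
    · -- right inverse
      rintro (⟨⟨A', hA'⟩, x⟩ | ⟨u, hu⟩) <;> dsimp only
      · have key : ∀ j < 2*k-1,
            delF k (extF (ofF (2*k) (insF k x (extF A')))) j = extF A' j := by
          intro j hj
          have s1 := delF_congr (k := k) (n := 2*k-1)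
            (fun t ht => extF_ofF (m := 2*k) (insF k x (extF A')) t (by omega)) j hj
          rw [s1, delF_insF k x (extF A')]
        simp only [Sum.elim_inl]
        erw [dif_pos ((GoodF_congr (by omega) key).mpr hA')]
        congr 1
        refine Prod.ext ?_ ?_
        · apply Subtype.ext
          funext j
          show delF k (extF (ofF (2*k) (insF k x (extF A')))) ↑j = A' j
          rw [key ↑j j.isLt, extF_val]
        · show extF (ofF (2*k) (insF k x (extF A'))) k = x
          rw [extF_ofF _ k (by omega), insF_at_k]
      · have key2 : ∀ j < 2*k-1,
            delF k (extF (ofF (2*k) (dbl0F k (extF u)))) j = delF k (dbl0F k (extF u)) j :=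
          delF_congr (fun t ht => extF_ofF _ t (by omega))
        have hcond : ¬ GoodF (2*k-1) (delF k (extF (ofF (2*k) (dbl0F k (extF u))))) :=
          fun hg => (dbl0_good hk hu).2 ((GoodF_congr (by omega) key2).mp hg)
        simp only [Sum.elim_inr]
        erw [dif_neg hcond]
        congr 1
        apply Subtype.ext
        funext j
        show extF (ofF (2*k) (dbl0F k (extF u))) ↑j = u j
        rw [extF_ofF _ ↑j (by omega)]
        show dbl0F k (extF u) ↑j = u j
        simp only [dbl0F]
        rw [if_pos j.isLt, extF_val]
  have hc := Fintype.card_congr e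
  rw [Fintype.card_sum, Fintype.card_prod, Fintype.card_bool] at hc
  omega

lemma rec_odd {k : ℕ} (hk : 3 ≤ k) : 2 * cstar (2*k) = cstar (2*k+1) + cstar (k+1) := by
  rw [cstar_eq (by omega : 3 ≤ 2*k), cstar_eq (by omega : 3 ≤ 2*k+1),
      cstar_eq (by omega : 3 ≤ k+1)]
  have e : ({A : Fin (2*k) → Bool // GoodF (2*k) (extF A)} × Bool) ≃
      {A : Fin (2*k+1) → Bool // GoodF (2*k+1) (extF A)} ⊕
        {A : Fin (k+1) → Bool // GoodF (k+1) (extF A)} := by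
    refine ⟨fun p => if h : GoodF (2*k+1) (insF k p.2 (extF p.1.1)) then
        Sum.inl ⟨ofF (2*k+1) (insF k p.2 (extF p.1.1)),
          (GoodF_congr (by omega) (extF_ofF _)).mpr h⟩
      else
        Sum.inr ⟨ofF (k+1) (insF k p.2 (extF p.1.1)),
          (GoodF_congr (by omega) (fun i hi =>
              (extF_ofF _ i hi))).mpr (ins_not_good_odd hk p.1.2 p.2 h).1⟩,
      Sum.elim
        (fun A' => (⟨ofF (2*k) (delF k (extF A'.1)),
          (GoodF_congr (by omega) (extF_ofF _)).mpr (del_good_odd hk A'.2)⟩, extF A'.1 k))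
        (fun u => (⟨ofF (2*k) (delF k (dblF k (extF u.1))),
          (GoodF_congr (by omega) (extF_ofF _)).mpr (dbl_good hk u.2).2⟩, extF u.1 k)),
      ?_, ?_⟩
    · -- left inverse
      rintro ⟨⟨A, hA⟩, x⟩
      dsimp only
      by_cases h : GoodF (2*k+1) (insF k x (extF A))
      · rw [dif_pos h]
        simp only [Sum.elim_inl]
        refine Prod.ext ?_ ?_
        · apply Subtype.ext
          funext i
          show delF k (extF (ofF (2*k+1) (insF k x (extF A)))) ↑i = A i
          have s1 := delF_congr (k := k) (n := 2*k)
            (fun t ht => extF_ofF (m := 2*k+1) (insF k x (extF A)) t (by omega)) ↑i i.isLt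
          rw [s1, delF_insF k x (extF A), extF_val]
        · show extF (ofF (2*k+1) (insF k x (extF A))) k = x
          rw [extF_ofF _ k (by omega), insF_at_k]
      · rw [dif_neg h]
        simp only [Sum.elim_inr]
        have hh : ∀ j < 2*k+1,
            dblF k (extF (ofF (k+1) (insF k x (extF A)))) j = insF k x (extF A) j := by
          intro j hj
          have s1 := dblF_congr (k := k)
            (fun t ht => extF_ofF (m := k+1) (insF k x (extF A)) t ht) j hj
          rw [s1, ← (ins_not_good_odd hk hA x h).2 j hj]
        refine Prod.ext ?_ ?_
        · apply Subtype.ext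
          funext i
          show delF k (dblF k (extF (ofF (k+1) (insF k x (extF A))))) ↑i = A i
          have s2 := delF_congr (k := k) (n := 2*k) hh ↑i i.isLt
          rw [s2, delF_insF k x (extF A), extF_val]
        · show extF (ofF (k+1) (insF k x (extF A))) k = x
          rw [extF_ofF _ k (by omega), insF_at_k]
    · -- right inverse
      rintro (⟨A', hA'⟩ | ⟨u, hu⟩) <;> dsimp only
      · simp only [Sum.elim_inl]
        have key : ∀ j < 2*k+1,
            insF k (extF A' k) (extF (ofF (2*k) (delF k (extF A')))) j = extF A' j := by
          intro j hj
          have s1 := insF_congr (extF A' k) (by omega : k ≤ 2*k)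
            (extF_ofF (m := 2*k) (delF k (extF A'))) j hj
          rw [s1, insF_delF k (extF A')]
        erw [dif_pos ((GoodF_congr (by omega) key).mpr hA')]
        congr 1
        apply Subtype.ext
        funext j
        show insF k (extF A' k) (extF (ofF (2*k) (delF k (extF A')))) ↑j = A' j
        rw [key ↑j j.isLt, extF_val]
      · simp only [Sum.elim_inr]
        have dk : dblF k (extF u) k = extF u k := by simp [dblF]
        have key : ∀ j < 2*k+1,
            insF k (extF u k) (extF (ofF (2*k) (delF k (dblF k (extF u))))) j
              = dblF k (extF u) j := by
          intro j hj
          have s1 := insF_congr (extF u k) (by omega : k ≤ 2*k)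
            (extF_ofF (m := 2*k) (delF k (dblF k (extF u)))) j hj
          rw [s1, ← dk, insF_delF k (dblF k (extF u))]
        have hcond : ¬ GoodF (2*k+1)
            (insF k (extF u k) (extF (ofF (2*k) (delF k (dblF k (extF u)))))) :=
          fun hg => (dbl_good hk hu).1 ((GoodF_congr (by omega) key).mp hg)
        erw [dif_neg hcond]
        congr 1
        apply Subtype.ext
        funext j
        show insF k (extF u k) (extF (ofF (2*k) (delF k (dblF k (extF u))))) ↑j = u j
        rw [key ↑j (by omega)]
        show dblF k (extF u) ↑j = u j
        simp only [dblF]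
        rw [if_pos (by omega : (j:ℕ) ≤ k), extF_val]
  have hc := Fintype.card_congr e
  rw [Fintype.card_sum, Fintype.card_prod, Fintype.card_bool] at hc
  omega

/-! ### Small values and upper bound -/

lemma cstar3 : cstar 3 = 1 := by decide
lemma cstar4 : cstar 4 = 1 := by decide
lemma cstar5 : cstar 5 = 1 := by decide

lemma cstar_le (m : ℕ) : cstar m ≤ 2 ^ m := by
  unfold cstar
  calc Fintype.card _ ≤ Fintype.card (Fin m → Bool) := Fintype.card_subtype_le _
  _ = 2 ^ m := by simp [Fintype.card_fun]

lemma cstar6 : cstar 6 = 3 := by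
  have h := rec_even (k := 3) le_rfl
  norm_num [cstar5, cstar3] at h
  exact h

lemma cstar7 : cstar 7 = 5 := by
  have h := rec_odd (k := 3) le_rfl
  norm_num [cstar6, cstar4] at h
  omega

lemma cstar8 : cstar 8 = 11 := by
  have h := rec_even (k := 4) (by omega)
  norm_num [cstar7, cstar4] at h
  exact h

lemma cstar9 : cstar 9 = 21 := by
  have h := rec_odd (k := 4) (by omega)
  norm_num [cstar8, cstar5] at h
  omega

lemma cstar10 : cstar 10 = 43 := by
  have h := rec_even (k := 5) (by omega)
  norm_num [cstar9, cstar5] at h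
  exact h

lemma cstar11 : cstar 11 = 83 := by
  have h := rec_odd (k := 5) (by omega)
  norm_num [cstar10, cstar6] at h
  omega

/-! ### Real-valued recurrences -/

lemma rec_evenR {k : ℕ} (hk : 3 ≤ k) :
    (cstar (2*k+2) : ℝ) = 2 * (cstar (2*k+1) : ℝ) + (cstar (k+1) : ℝ) := by
  have h := rec_even (k := k+1) (by omega)
  rw [(by ring : 2*(k+1) = 2*k+2)] at h
  rw [(by omega : 2*k+2-1 = 2*k+1)] at h
  exact_mod_cast h

lemma rec_oddR {k : ℕ} (hk : 3 ≤ k) :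
    2 * (cstar (2*k) : ℝ) = (cstar (2*k+1) : ℝ) + (cstar (k+1) : ℝ) := by
  exact_mod_cast rec_odd hk

lemma cstar_leR (m : ℕ) : (cstar m : ℝ) ≤ 2 ^ m := by
  exact_mod_cast cstar_le m

/-! ### Asymptotics -/

noncomputable def sq2 : ℝ := Real.sqrt 2
noncomputable def qq : ℝ := 1 / (2 * sq2)
noncomputable def aSeq (k : ℕ) : ℝ := (cstar (2*k+1) : ℝ) / 2 ^ (2*k+1)

lemma sq2_sq : sq2 ^ 2 = 2 := Real.sq_sqrt (by norm_num)
lemma sq2_pos : 0 < sq2 := Real.sqrt_pos.mpr (by norm_num)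
lemma sq2_ge_one : 1 ≤ sq2 := by nlinarith [sq2_sq, sq2_pos]
lemma qq_pos : 0 < qq := by unfold qq sq2; positivity
lemma qq_le_half : qq ≤ 1/2 := by
  have h1 := sq2_ge_one
  unfold qq
  rw [div_le_div_iff₀ (by nlinarith) (by norm_num)]
  nlinarith
lemma qq_lt_one : qq < 1 := lt_of_le_of_lt qq_le_half (by norm_num)
lemma one_sub_qq_pos : 0 < 1 - qq := by linarith [qq_lt_one]

lemma two_pow_eq (j : ℕ) : (2:ℝ) ^ j = sq2 ^ (2*j) := by rw [pow_mul, sq2_sq]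

lemma qid (k : ℕ) : qq ^ (k+1) = sq2 ^ (k+3) / 2 ^ (2*k+3) := by
  rw [eq_div_iff (by positivity : ((2:ℝ)^(2*k+3)) ≠ 0)]
  have h1 : qq ^ (k+1) * (2*sq2) ^ (k+1) = 1 := by
    rw [← mul_pow]
    unfold qq
    rw [one_div, inv_mul_cancel₀ (by nlinarith [sq2_pos] : (2*sq2) ≠ 0), one_pow]
  have h2 : sq2 ^ (k+3) * (2*sq2) ^ (k+1) = 2 ^ (2*k+3) := by
    rw [mul_pow, ← mul_assoc, mul_comm (sq2 ^ (k+3)) ((2:ℝ)^(k+1)), mul_assoc,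
        ← pow_add, (by omega : k+3+(k+1) = 2*(k+2)), ← two_pow_eq, ← pow_add]
    congr 1
    omega
  calc qq ^ (k+1) * 2 ^ (2*k+3) = qq ^ (k+1) * (sq2 ^ (k+3) * (2*sq2) ^ (k+1)) := by rw [h2]
  _ = (qq ^ (k+1) * (2*sq2) ^ (k+1)) * sq2 ^ (k+3) := by ring
  _ = sq2 ^ (k+3) := by rw [h1, one_mul]

lemma rec_oddR' {k : ℕ} (hk : 2 ≤ k) :
    2 * (cstar (2*k+2) : ℝ) = (cstar (2*k+3) : ℝ) + (cstar (k+2) : ℝ) := by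
  have h := rec_oddR (k := k+1) (by omega)
  rw [(by ring : 2*(k+1) = 2*k+2)] at h
  rw [(by omega : 2*k+2+1 = 2*k+3)] at h
  rw [(by omega : k+1+1 = k+2)] at h
  exact h

lemma diff_bound {k : ℕ} (hk : 5 ≤ k) : |aSeq (k+1) - aSeq k| ≤ qq ^ (k+1) := by
  have hE := rec_evenR (k := k) (by omega)
  have hO := rec_oddR' (k := k) (by omega)
  have hp1 : (0:ℝ) < 2 ^ (2*k+1) := by positivity
  have hp3 : (0:ℝ) < 2 ^ (2*k+3) := by positivity
  have hp : (2:ℝ) ^ (2*k+3) = 4 * 2 ^ (2*k+1) := by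
    rw [(by omega : 2*k+3 = 2*k+1+2), pow_add]; ring
  have key : (cstar (2*k+3):ℝ) = 4*(cstar (2*k+1):ℝ) + 2*(cstar (k+1):ℝ) - (cstar (k+2):ℝ) := by
    linarith
  have hval : aSeq (k+1) - aSeq k
      = (2*(cstar (k+1):ℝ) - (cstar (k+2):ℝ)) / 2 ^ (2*k+3) := by
    unfold aSeq
    rw [(by ring : 2*(k+1)+1 = 2*k+3), key, hp]
    field_simp
    ring
  rw [hval, abs_div, abs_of_pos hp3, div_le_iff₀ hp3, qid, div_mul_cancel₀ _ (ne_of_gt hp3)]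
  -- |2 F(k+1) - F(k+2)| ≤ sq2 ^ (k+3)
  rcases Nat.even_or_odd k with ⟨t, ht⟩ | ⟨t, ht⟩
  · -- k = 2t, t ≥ 3
    have ht' : k = 2*t := by omega
    have he := rec_evenR (k := t) (by omega)
    rw [(by omega : 2*t+2 = k+2), (by omega : 2*t+1 = k+1)] at he
    have ht1 : t + 1 ≤ k := by omega
    have hnum : 2*(cstar (k+1):ℝ) - (cstar (k+2):ℝ) = -((cstar (t+1) : ℝ)) := by
      rw [he]; ring
    rw [hnum, abs_neg, abs_of_nonneg (by positivity)]
    calc (cstar (t+1):ℝ) ≤ 2 ^ (t+1) := cstar_leR (t+1)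
    _ = sq2 ^ (2*(t+1)) := two_pow_eq (t+1)
    _ ≤ sq2 ^ (k+3) := pow_le_pow_right₀ sq2_ge_one (by omega)
  · -- k = 2t+1, t ≥ 2
    have ht' : k = 2*t+1 := by omega
    have ho := rec_oddR' (k := t) (by omega)
    rw [(by omega : 2*t+2 = k+1), (by omega : 2*t+3 = k+2)] at ho
    have hnum : 2*(cstar (k+1):ℝ) - (cstar (k+2):ℝ) = (cstar (t+2) : ℝ) := by
      rw [ho]; ring
    rw [hnum, abs_of_nonneg (by positivity)]
    calc (cstar (t+2):ℝ) ≤ 2 ^ (t+2) := cstar_leR (t+2)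
    _ = sq2 ^ (2*(t+2)) := two_pow_eq (t+2)
    _ ≤ sq2 ^ (k+3) := pow_le_pow_right₀ sq2_ge_one (by omega)

lemma sq2_key : sq2 ≤ 4*(1-qq) := by
  have h1 := sq2_ge_one
  have h2 := sq2_pos
  have h3 : qq * (2*sq2) = 1 := by
    unfold qq
    rw [one_div, inv_mul_cancel₀ (by nlinarith : (2*sq2) ≠ 0)]
  nlinarith [sq2_sq]

lemma exists_alpha : ∃ α : ℝ,
    Filter.Tendsto (fun n : ℕ => aSeq (n+5)) Filter.atTop (nhds α) ∧
    (∀ k, 5 ≤ k → |aSeq k - α| ≤ qq ^ (k+1) / (1 - qq)) := by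
  have hstep : ∀ n : ℕ, dist (aSeq (n+5)) (aSeq (n+5+1)) ≤ qq^6 * qq^n := by
    intro n
    rw [Real.dist_eq, abs_sub_comm]
    calc |aSeq (n+5+1) - aSeq (n+5)| ≤ qq ^ (n+5+1) := diff_bound (by omega)
    _ = qq^6 * qq^n := by rw [(by omega : n+5+1 = 6+n), pow_add]
  obtain ⟨α, hα⟩ := cauchySeq_tendsto_of_complete
    (cauchySeq_of_le_geometric qq (qq^6) qq_lt_one hstep)
  refine ⟨α, hα, fun k hk => ?_⟩
  have hd := dist_le_of_le_geometric_of_tendsto qq (qq^6) qq_lt_one hstep hα (k-5)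
  rw [Real.dist_eq, (by omega : k-5+5 = k)] at hd
  calc |aSeq k - α| ≤ qq^6 * qq^(k-5) / (1-qq) := hd
  _ = qq ^ (k+1) / (1-qq) := by rw [← pow_add, (by omega : 6+(k-5) = k+1)]

/-- Main estimate package. -/
lemma alpha_props : ∃ α : ℝ, 0 < α ∧ α ≤ 1 ∧
    Filter.Tendsto (fun n : ℕ => aSeq (n+5)) Filter.atTop (nhds α) ∧
    (∀ k, 5 ≤ k → |(cstar (2*k+1):ℝ) - α * 2^(2*k+1)| ≤ sq2^(k+2)) := by
  obtain ⟨α, hα, hclose⟩ := exists_alpha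
  have hsq := one_sub_qq_pos
  have hstar : ∀ k, 5 ≤ k → |(cstar (2*k+1):ℝ) - α * 2^(2*k+1)| ≤ sq2^(k+2) := by
    intro k hk
    have hp1 : (0:ℝ) < 2 ^ (2*k+1) := by positivity
    have hp3 : (0:ℝ) < 2 ^ (2*k+3) := by positivity
    have hrepr : (cstar (2*k+1):ℝ) - α * 2^(2*k+1) = (aSeq k - α) * 2^(2*k+1) := by
      unfold aSeq; field_simp
    rw [hrepr, abs_mul, abs_of_pos hp1]
    have h1 : |aSeq k - α| * 2^(2*k+1) ≤ qq^(k+1)/(1-qq) * 2^(2*k+1) :=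
      mul_le_mul_of_nonneg_right (hclose k hk) (le_of_lt hp1)
    have hp : (2:ℝ) ^ (2*k+3) = 4 * 2 ^ (2*k+1) := by
      rw [(by omega : 2*k+3 = 2*k+1+2), pow_add]; ring
    have h2 : qq^(k+1)/(1-qq) * 2^(2*k+1) = sq2^(k+3) / (4*(1-qq)) := by
      rw [qid, hp]
      field_simp
    have h3 : sq2^(k+3) / (4*(1-qq)) ≤ sq2^(k+2) := by
      rw [div_le_iff₀ (by nlinarith : (0:ℝ) < 4*(1-qq))]
      calc sq2^(k+3) = sq2^(k+2) * sq2 := by rw [← pow_succ]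
      _ ≤ sq2^(k+2) * (4*(1-qq)) :=
        mul_le_mul_of_nonneg_left sq2_key (pow_nonneg (le_of_lt sq2_pos) _)
    calc |aSeq k - α| * 2^(2*k+1) ≤ qq^(k+1)/(1-qq) * 2^(2*k+1) := h1
    _ = sq2^(k+3) / (4*(1-qq)) := h2
    _ ≤ sq2^(k+2) := h3
  have hpos : 0 < α := by
    have h5 := hclose 5 le_rfl
    have ha5 : aSeq 5 = 83/2048 := by
      unfold aSeq
      norm_num [cstar11]
    have hq6 : qq^6 ≤ (1/2)^6 :=
      pow_le_pow_left₀ (le_of_lt qq_pos) qq_le_half 6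
    have hq7 : qq^6/(1-qq) ≤ 1/32 := by
      rw [div_le_iff₀ hsq]
      have : (1:ℝ)/2 ≤ 1 - qq := by linarith [qq_le_half]
      calc qq^6 ≤ (1/2)^6 := hq6
      _ = (1/32) * (1/2) := by norm_num
      _ ≤ (1/32) * (1-qq) := by nlinarith
    have habs : aSeq 5 - α ≤ 1/32 := le_trans (le_trans (le_abs_self _) h5) hq7
    rw [ha5] at habs
    linarith
  have hle1 : α ≤ 1 := by
    apply le_of_tendsto' hα
    intro n
    unfold aSeq
    rw [div_le_one (by positivity)]
    exact cstar_leR _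
  exact ⟨α, hpos, hle1, hα, hstar⟩

lemma spow_le_rpow {j n : ℕ} (hjn : 2*j ≤ n) : sq2^j ≤ (2:ℝ) ^ ((n:ℝ)/4) := by
  have e1 : sq2 ^ j = (2:ℝ) ^ ((j:ℝ)/2) := by
    unfold sq2
    rw [Real.sqrt_eq_rpow, ← Real.rpow_natCast ((2:ℝ) ^ (1/(2:ℝ))) j,
        ← Real.rpow_mul (by norm_num : (0:ℝ) ≤ 2)]
    congr 1
    ring
  rw [e1]
  apply Real.rpow_le_rpow_of_exponent_le (by norm_num)
  have : (2*j : ℝ) ≤ (n : ℝ) := by exact_mod_cast hjn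
  linarith

lemma sq2_le_2 : sq2 ≤ 2 := by nlinarith [sq2_sq, sq2_pos]

lemma sq2_lt_2 : sq2 < 2 := by nlinarith [sq2_sq, sq2_pos]

set_option maxHeartbeats 2000000 in
open Filter in
theorem cn_asymptotic :
    ∃ α : ℝ, 0 < α ∧
      Tendsto (fun n : ℕ => (c n : ℝ) / 2 ^ n) atTop (nhds α) ∧
      ∃ K : ℝ, 0 < K ∧ ∃ N : ℕ, ∀ n : ℕ, N ≤ n →
        (Even n → |(c n : ℝ) - α * 2 ^ n| ≤ K * (2 : ℝ) ^ ((n : ℝ) / 4)) ∧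
        (Odd n → |(c n : ℝ) - α * (2 ^ n + 2 ^ (n / 2 + 1))| ≤
          K * (2 : ℝ) ^ ((n : ℝ) / 4)) := by
  obtain ⟨α, hαpos, hαle1, hα, hstar⟩ := alpha_props
  have hs1 := sq2_ge_one
  have hs0 := sq2_pos
  -- general bound for all indices ≥ 11
  have G : ∀ m, 11 ≤ m → |(cstar m : ℝ) - α*2^m| ≤ sq2^(m+2) := by
    intro m hm
    rcases Nat.even_or_odd m with ⟨t, ht⟩ | ⟨t, ht⟩
    · have htm : m = 2*t := by omega
      have e := rec_oddR (k := t) (by omega)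
      have hnum : 2*((cstar m:ℝ) - α*2^m)
          = ((cstar (2*t+1):ℝ) - α*2^(2*t+1)) + (cstar (t+1):ℝ) := by
        subst htm
        rw [pow_succ]
        linarith [e]
      have h1 : |(cstar (2*t+1):ℝ) - α*2^(2*t+1)| ≤ sq2^(t+2) := hstar t (by omega)
      have h2 : (cstar (t+1):ℝ) ≤ 2^(t+1) := cstar_leR _
      have h2' : (2:ℝ)^(t+1) = sq2^(2*t+2) := by
        rw [two_pow_eq]; congr 1 <;> omega
      have h3 : sq2^(t+2) ≤ sq2^(2*t+2) := pow_le_pow_right₀ hs1 (by omega)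
      have h2a : |2*((cstar m:ℝ) - α*2^m)| ≤ sq2^(t+2) + sq2^(2*t+2) := by
        rw [hnum]
        refine le_trans (abs_add_le _ _) (add_le_add h1 ?_)
        rw [abs_of_nonneg (by positivity), ← h2']
        exact h2
      rw [abs_mul, abs_two] at h2a
      have hm2 : m + 2 = 2*t+2 := by omega
      rw [hm2]
      nlinarith [pow_nonneg (le_of_lt hs0) (2*t+2), pow_nonneg (le_of_lt hs0) (t+2),
        abs_nonneg ((cstar m:ℝ) - α*2^m)]
    · have htm : m = 2*t+1 := by omega
      have ht5 : 5 ≤ t := by omega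
      have h1 := hstar t ht5
      rw [← htm] at h1
      calc |(cstar m:ℝ) - α*2^m| ≤ sq2^(t+2) := h1
      _ ≤ sq2^(m+2) := pow_le_pow_right₀ hs1 (by omega)
  -- the even-index target bound
  have hOddT : ∀ t, 10 ≤ t → |(cstar (2*t):ℝ) - α*(2^(2*t) + 2^t)| ≤ sq2^(t+3) := by
    intro t ht
    have e := rec_oddR (k := t) (by omega)
    have h1 := hstar t (by omega)
    have h2 := G (t+1) (by omega)
    have hnum : 2*((cstar (2*t):ℝ) - α*(2^(2*t) + 2^t)) =
        ((cstar (2*t+1):ℝ) - α*2^(2*t+1)) + ((cstar (t+1):ℝ) - α*2^(t+1)) := by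
      rw [pow_succ (2:ℝ) (2*t), pow_succ (2:ℝ) t]
      linarith [e]
    have h3 : sq2^(t+2) ≤ sq2^(t+3) := pow_le_pow_right₀ hs1 (by omega)
    have h4 : sq2^(t+1+2) = sq2^(t+3) := by congr 1
    rw [h4] at h2
    have h2a : |2*((cstar (2*t):ℝ) - α*(2^(2*t) + 2^t))| ≤ sq2^(t+2) + sq2^(t+3) := by
      rw [hnum]
      exact le_trans (abs_add_le _ _) (add_le_add h1 h2)
    rw [abs_mul, abs_two] at h2a
    nlinarith [abs_nonneg ((cstar (2*t):ℝ) - α*(2^(2*t) + 2^t))]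
  -- the two clean final bounds
  have hEvenN : ∀ K, 5 ≤ K → |(c (2*K+2):ℝ) - α*2^(2*K+2)| ≤ sq2^(K+4) := by
    intro K hK
    have hc : c (2*K+2) = 2 * cstar (2*K+1) := by
      unfold c; norm_num
    have h1 := hstar K hK
    have hnum : (c (2*K+2):ℝ) - α*2^(2*K+2)
        = 2*((cstar (2*K+1):ℝ) - α*2^(2*K+1)) := by
      rw [hc]
      push_cast
      rw [(by omega : 2*K+2 = (2*K+1)+1), pow_succ]
      try ring
    rw [hnum, abs_mul, abs_two]
    calc 2 * |(cstar (2*K+1):ℝ) - α*2^(2*K+1)| ≤ 2 * sq2^(K+2) := by linarith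
    _ = sq2^(K+4) := by
        have e2 : sq2^(K+4) = sq2^(K+2)*(sq2*sq2) := by ring
        have e3 : sq2*sq2 = 2 := by nlinarith [sq2_sq]
        rw [e2, e3]
        ring
  have hOddN : ∀ t, 10 ≤ t →
      |(c (2*t+1):ℝ) - α*(2^(2*t+1) + 2^(t+1))| ≤ sq2^(t+5) := by
    intro t ht
    have hc : c (2*t+1) = 2 * cstar (2*t) := by
      unfold c; norm_num
    have h1 := hOddT t ht
    have hnum : (c (2*t+1):ℝ) - α*(2^(2*t+1) + 2^(t+1))
        = 2*((cstar (2*t):ℝ) - α*(2^(2*t) + 2^t)) := by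
      rw [hc]
      push_cast
      rw [pow_succ (2:ℝ) (2*t), pow_succ (2:ℝ) t]
      try ring
    rw [hnum, abs_mul, abs_two]
    calc 2 * |(cstar (2*t):ℝ) - α*(2^(2*t) + 2^t)| ≤ 2 * sq2^(t+3) := by linarith
    _ = sq2^(t+5) := by
        have e2 : sq2^(t+5) = sq2^(t+3)*(sq2*sq2) := by ring
        have e3 : sq2*sq2 = 2 := by nlinarith [sq2_sq]
        rw [e2, e3]
        ring
  -- uniform coarse bound for the limit
  have hU : ∀ n, 31 ≤ n → |(c n:ℝ) - α*2^n| ≤ 64 * sq2^n := by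
    intro n hn
    rcases Nat.even_or_odd n with ⟨t, ht⟩ | ⟨t, ht⟩
    · have hK : n = 2*(t-1)+2 := by omega
      have h1 := hEvenN (t-1) (by omega)
      rw [← hK] at h1
      calc |(c n:ℝ) - α*2^n| ≤ sq2^(t-1+4) := h1
      _ ≤ sq2^n := pow_le_pow_right₀ hs1 (by omega)
      _ ≤ 64 * sq2^n := by nlinarith [pow_nonneg (le_of_lt hs0) n]
    · have hK : n = 2*t+1 := by omega
      have h1 := hOddN t (by omega)
      rw [← hK] at h1
      have h2 : (2:ℝ)^(t+1) = sq2^(2*t+2) := by rw [two_pow_eq]; congr 1 <;> omega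
      have h3 : |(c n:ℝ) - α*2^n| ≤ sq2^(t+5) + α * 2^(t+1) := by
        have := abs_add_le ((c n:ℝ) - α*(2^n + 2^(t+1))) (α*2^(t+1))
        have he : (c n:ℝ) - α*2^n = ((c n:ℝ) - α*(2^n + 2^(t+1))) + α*2^(t+1) := by ring
        rw [he]
        refine le_trans (abs_add_le _ _) (add_le_add h1 ?_)
        rw [abs_of_nonneg (mul_nonneg (le_of_lt hαpos) (by positivity))]
      have h4 : α * 2^(t+1) ≤ sq2^(2*t+2) := by
        rw [← h2]
        nlinarith [pow_pos (by norm_num : (0:ℝ) < 2) (t+1)]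
      have h5 : sq2^(t+5) ≤ sq2^(2*t+2) := pow_le_pow_right₀ hs1 (by omega)
      have h6 : sq2^(2*t+2) ≤ sq2 * sq2^n := by
        rw [hK, (by omega : 2*t+2 = (2*t+1)+1), pow_succ]
        ring_nf
        exact le_refl _
      have h7 : sq2 * sq2^n ≤ 2 * sq2^n :=
        mul_le_mul_of_nonneg_right sq2_le_2 (pow_nonneg (le_of_lt hs0) n)
      nlinarith [pow_nonneg (le_of_lt hs0) n]
  -- Tendsto
  have htend : Tendsto (fun n : ℕ => (c n : ℝ) / 2 ^ n) atTop (nhds α) := by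
    have hr0 : (0:ℝ) ≤ sq2/2 := by positivity
    have hr1 : sq2/2 < 1 := by linarith [sq2_lt_2]
    have hgeo : Tendsto (fun n : ℕ => 64*(sq2/2)^n) atTop (nhds 0) := by
      have := tendsto_pow_atTop_nhds_zero_of_lt_one hr0 hr1
      simpa using this.const_mul (64:ℝ)
    have hbnd : ∀ n, 31 ≤ n → |(c n:ℝ)/2^n - α| ≤ 64*(sq2/2)^n := by
      intro n hn
      have hp : (0:ℝ) < 2^n := by positivity
      have he : (c n:ℝ)/2^n - α = ((c n:ℝ) - α*2^n)/2^n := by field_simp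
      have hstep1 : |(c n:ℝ) - α*2^n| / 2^n ≤ (64*sq2^n) / 2^n := by
        gcongr
        exact hU n hn
      have hstep2 : (64*sq2^n) / 2^n = 64*(sq2/2)^n := by rw [div_pow]; ring
      rw [he, abs_div, abs_of_pos hp, ← hstep2]
      exact hstep1
    apply tendsto_of_tendsto_of_tendsto_of_le_of_le'
      (g := fun n : ℕ => α - 64*(sq2/2)^n) (h := fun n : ℕ => α + 64*(sq2/2)^n)
    · simpa using (tendsto_const_nhds (x := α)).sub hgeo
    · simpa using (tendsto_const_nhds (x := α)).add hgeo
    · filter_upwards [eventually_ge_atTop 31] with n hn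
      have := hbnd n hn
      have h2 := abs_le.mp this
      linarith [h2.1]
    · filter_upwards [eventually_ge_atTop 31] with n hn
      have := hbnd n hn
      have h2 := abs_le.mp this
      linarith [h2.2]
  refine ⟨α, hαpos, htend, 32, by norm_num, 31, fun n hn => ⟨?_, ?_⟩⟩
  · rintro ⟨t, ht⟩
    have hK : n = 2*(t-1)+2 := by omega
    have h1 := hEvenN (t-1) (by omega)
    rw [← hK] at h1
    have h2 : sq2^(t-1+4) ≤ 4 * (2:ℝ)^((n:ℝ)/4) := by
      have e : sq2^(t-1+4) = sq2^(t-1+1) * sq2^3 := by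
        rw [← pow_add]
      have h3 : sq2^(t-1+1) ≤ (2:ℝ)^((n:ℝ)/4) := spow_le_rpow (by omega)
      have h4 : sq2^3 ≤ 4 := by nlinarith [sq2_sq, sq2_le_2, sq2_pos]
      have h5 : (0:ℝ) ≤ (2:ℝ)^((n:ℝ)/4) := Real.rpow_nonneg (by norm_num) _
      calc sq2^(t-1+4) = sq2^(t-1+1) * sq2^3 := e
      _ ≤ (2:ℝ)^((n:ℝ)/4) * 4 := by
          apply mul_le_mul h3 h4 (pow_nonneg (le_of_lt hs0) 3) h5
      _ = 4 * (2:ℝ)^((n:ℝ)/4) := by ring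
    have h5 : (0:ℝ) ≤ (2:ℝ)^((n:ℝ)/4) := Real.rpow_nonneg (by norm_num) _
    calc |(c n:ℝ) - α*2^n| ≤ sq2^(t-1+4) := h1
    _ ≤ 4 * (2:ℝ)^((n:ℝ)/4) := h2
    _ ≤ 32 * (2:ℝ)^((n:ℝ)/4) := by nlinarith
  · rintro ⟨t, ht⟩
    have hK : n = 2*t+1 := by omega
    have h1 := hOddN t (by omega)
    rw [← hK] at h1
    have hdiv : n/2 + 1 = t + 1 := by omega
    rw [hdiv]
    have h2 : sq2^(t+5) ≤ 8 * (2:ℝ)^((n:ℝ)/4) := by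
      have e : sq2^(t+5) = sq2^t * sq2^5 := by rw [← pow_add]
      have h3 : sq2^t ≤ (2:ℝ)^((n:ℝ)/4) := spow_le_rpow (by omega)
      have h4 : sq2^5 ≤ 8 := by
        have e4 : sq2^5 = (sq2^2)*(sq2^2)*sq2 := by ring
        rw [e4, sq2_sq]
        linarith [sq2_le_2]
      have h5 : (0:ℝ) ≤ (2:ℝ)^((n:ℝ)/4) := Real.rpow_nonneg (by norm_num) _
      calc sq2^(t+5) = sq2^t * sq2^5 := e
      _ ≤ (2:ℝ)^((n:ℝ)/4) * 8 := by
          apply mul_le_mul h3 h4 (pow_nonneg (le_of_lt hs0) 5) h5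
      _ = 8 * (2:ℝ)^((n:ℝ)/4) := by ring
    have h5 : (0:ℝ) ≤ (2:ℝ)^((n:ℝ)/4) := Real.rpow_nonneg (by norm_num) _
    calc |(c n:ℝ) - α*(2^n + 2^(t+1))| ≤ sq2^(t+5) := h1
    _ ≤ 8 * (2:ℝ)^((n:ℝ)/4) := h2
    _ ≤ 32 * (2:ℝ)^((n:ℝ)/4) := by nlinarith
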